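/- Let h be a nonnegative super-multiplicative function on [0,1] and f a nonnegative h-convex function on an interval I. Then for positive reals t₁,…,tₙ with Tₙ = ∑ tⱼ and points x₁,…,xₙ ∈ I: f((1/Tₙ)∑ⱼ tⱼxⱼ) ≤ ∑ⱼ h(tⱼ/Tₙ)·f(xⱼ). -/

import Mathlib

private lemma hconvex_jensen_aux
    (h : ℝ → ℝ) (hh : ∀ t ∈ Set.Icc (0:ℝ) 1, 0 ≤ h t)
    (hsupmul : ∀ a b : ℝ, a ∈ Set.Icc (0:ℝ) 1 → b ∈ Set.Icc (0:ℝ) 1 →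
      h a * h b ≤ h (a * b))
    (I : Set ℝ) (hI : Convex ℝ I)
    (f : ℝ → ℝ) (hf : ∀ s ∈ I, 0 ≤ f s)
    (hconv : ∀ a ∈ I, ∀ b ∈ I, ∀ t ∈ Set.Icc (0:ℝ) 1,
        f (t * a + (1 - t) * b) ≤ h t * f a + h (1 - t) * f b) :
    ∀ n, 2 ≤ n → ∀ t : Fin n → ℝ, (∀ j, 0 < t j) → ∀ x : Fin n → ℝ, (∀ j, x j ∈ I) →
    f ((1 / ∑ j, t j) * ∑ j, t j * x j) ≤ ∑ j, h (t j / ∑ i, t i) * f (x j) := by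
  intro n hn
  induction n, hn using Nat.le_induction with
  | base =>
    intro t ht x hx
    simp only [Fin.sum_univ_two]
    set T := t 0 + t 1 with hTdef
    have hT : 0 < T := add_pos (ht 0) (ht 1)
    have hmem : t 0 / T ∈ Set.Icc (0:ℝ) 1 := by
      constructor
      · exact div_nonneg (ht 0).le hT.le
      · rw [div_le_one hT]; nlinarith [ht 1]
    have key := hconv (x 0) (hx 0) (x 1) (hx 1) (t 0 / T) hmem
    have h1 : 1 - t 0 / T = t 1 / T := by field_simp; rw [hTdef]; ring
    have harg : t 0 / T * x 0 + (1 - t 0 / T) * x 1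
        = (1 / T) * (t 0 * x 0 + t 1 * x 1) := by
      rw [h1]; field_simp
    rw [harg, h1] at key
    exact key
  | succ n hn ih =>
    intro t ht x hx
    set t' : Fin n → ℝ := fun j => t j.castSucc with ht'def
    set x' : Fin n → ℝ := fun j => x j.castSucc with hx'def
    set S : ℝ := ∑ j, t' j with hSdef
    have hS : 0 < S := Finset.sum_pos (fun j _ => ht j.castSucc) ⟨⟨0, by omega⟩, Finset.mem_univ _⟩
    have hTsplit : (∑ j, t j) = S + t (Fin.last n) := Fin.sum_univ_castSucc t
    set T : ℝ := ∑ j, t j with hTdef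
    have hT : 0 < T := by rw [hTsplit]; exact add_pos hS (ht _)
    have hSltT : S < T := by rw [hTsplit]; linarith [ht (Fin.last n)]
    set y : ℝ := (1 / S) * ∑ j, t' j * x' j with hydef
    have hy : y ∈ I := by
      have hmem : (∑ j, (t' j / S) • x' j) ∈ I := by
        apply hI.sum_mem
        · intro j _; exact div_nonneg (ht j.castSucc).le hS.le
        · rw [← Finset.sum_div, ← hSdef, div_self hS.ne']
        · intro j _; exact hx j.castSucc
      have : y = ∑ j, (t' j / S) • x' j := by
        rw [hydef, Finset.mul_sum]
        congr 1; ext j; simp [smul_eq_mul]; ring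
      rwa [this]
    have hSTmem : S / T ∈ Set.Icc (0:ℝ) 1 := by
      constructor
      · exact div_nonneg hS.le hT.le
      · rw [div_le_one hT]; exact hSltT.le
    have key := hconv y hy (x (Fin.last n)) (hx (Fin.last n)) (S / T) hSTmem
    have h1 : 1 - S / T = t (Fin.last n) / T := by
      field_simp; linarith [hTsplit]
    have harg : S / T * y + (1 - S / T) * x (Fin.last n)
        = (1 / T) * ∑ j, t j * x j := by
      rw [h1, hydef, Fin.sum_univ_castSucc (fun j => t j * x j)]
      field_simp
      ring
    rw [harg, h1] at key
    have ihy := ih t' (fun j => ht j.castSucc) x' (fun j => hx j.castSucc)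
    rw [← hSdef] at ihy
    have hhST : 0 ≤ h (S / T) := hh _ hSTmem
    have step1 : h (S / T) * f y ≤ ∑ j, h (t' j / T) * f (x' j) := by
      calc h (S / T) * f y ≤ h (S / T) * ∑ j, h (t' j / S) * f (x' j) :=
            mul_le_mul_of_nonneg_left ihy hhST
        _ = ∑ j, (h (S / T) * h (t' j / S)) * f (x' j) := by
            rw [Finset.mul_sum]; congr 1; ext j; ring
        _ ≤ ∑ j, h (t' j / T) * f (x' j) := by
            apply Finset.sum_le_sum
            intro j _
            apply mul_le_mul_of_nonneg_right _ (hf _ (hx j.castSucc))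
            have hjS : t' j / S ∈ Set.Icc (0:ℝ) 1 := by
              constructor
              · exact div_nonneg (ht j.castSucc).le hS.le
              · rw [div_le_one hS]
                exact Finset.single_le_sum (fun i _ => (ht i.castSucc).le)
                  (Finset.mem_univ j)
            have := hsupmul (S / T) (t' j / S) hSTmem hjS
            have heq : S / T * (t' j / S) = t' j / T := by
              field_simp
            rwa [heq] at this
    have hrhs : (∑ j, h (t j / T) * f (x j))
        = (∑ j, h (t' j / T) * f (x' j)) + h (t (Fin.last n) / T) * f (x (Fin.last n)) :=
      Fin.sum_univ_castSucc (fun j => h (t j / T) * f (x j))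
    rw [hrhs]
    calc f ((1 / T) * ∑ j, t j * x j)
        ≤ h (S / T) * f y + h (t (Fin.last n) / T) * f (x (Fin.last n)) := key
      _ ≤ (∑ j, h (t' j / T) * f (x' j)) + h (t (Fin.last n) / T) * f (x (Fin.last n)) := by
          have := hf _ (hx (Fin.last n))
          have hm : t (Fin.last n) / T ∈ Set.Icc (0:ℝ) 1 := by
            constructor
            · exact div_nonneg (ht (Fin.last n)).le hT.le
            · rw [div_le_one hT]; linarith [hTsplit, hS]
          nlinarith [step1, hh _ hm]

theorem hconvex_jensen
    (n : ℕ) (hn : 2 ≤ n)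
    (h : ℝ → ℝ) (hh : ∀ t ∈ Set.Icc (0:ℝ) 1, 0 ≤ h t)
    (hsupmul : ∀ a b : ℝ, a ∈ Set.Icc (0:ℝ) 1 → b ∈ Set.Icc (0:ℝ) 1 →
      h a * h b ≤ h (a * b))
    (I : Set ℝ) (hI : Convex ℝ I)
    (f : ℝ → ℝ) (hf : ∀ s ∈ I, 0 ≤ f s)
    (hconv : ∀ a ∈ I, ∀ b ∈ I, ∀ t ∈ Set.Icc (0:ℝ) 1,
        f (t * a + (1 - t) * b) ≤ h t * f a + h (1 - t) * f b)
    (t : Fin n → ℝ) (ht : ∀ j, 0 < t j)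
    (x : Fin n → ℝ) (hx : ∀ j, x j ∈ I) :
    f ((1 / ∑ j, t j) * ∑ j, t j * x j) ≤
      ∑ j, h (t j / ∑ i, t i) * f (x j) := by
  exact hconvex_jensen_aux h hh hsupmul I hI f hf hconv n hn t ht x hx
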